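/- Let P and Q be orthogonal projections on a complex Hilbert space H. Then ‖PQ + QP‖ = 2 if and only if ‖PQ‖ = 1. -/

import Mathlib

set_option synthInstance.maxHeartbeats 400000
set_option maxHeartbeats 1000000

open scoped InnerProductSpace

lemma proj_norm_le_one' {H : Type*} [NormedAddCommGroup H] [InnerProductSpace ℂ H]
    [CompleteSpace H] (P : H →L[ℂ] H) (hP : IsSelfAdjoint P) (hP2 : P * P = P) :
    ‖P‖ ≤ 1 := by
  refine P.opNorm_le_bound zero_le_one (fun x => ?_)
  rw [one_mul]
  have hadj : ∀ z w : H, ⟪P z, w⟫_ℂ = ⟪z, P w⟫_ℂ := by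
    intro z w
    conv_lhs => rw [← hP.adjoint_eq]
    exact ContinuousLinearMap.adjoint_inner_left P w z
  have h2 : ⟪P x, P x⟫_ℂ = ⟪x, P x⟫_ℂ := by
    rw [hadj x (P x), ← ContinuousLinearMap.mul_apply, hP2]
  have h1 : (‖P x‖ : ℝ)^2 = Complex.re (⟪P x, P x⟫_ℂ) := by
    rw [← @inner_self_eq_norm_sq ℂ]; rfl
  have h3 : Complex.re (⟪x, P x⟫_ℂ) ≤ ‖x‖ * ‖P x‖ := by
    calc Complex.re (⟪x, P x⟫_ℂ) ≤ ‖(⟪x, P x⟫_ℂ)‖ := Complex.re_le_norm _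
    _ ≤ ‖x‖ * ‖P x‖ := norm_inner_le_norm _ _
  rcases eq_or_lt_of_le (norm_nonneg (P x)) with h | h
  · simp [← h]
  · nlinarith [h1, h2 ▸ h1, h3]

/-- For orthogonal projections `P, Q` on a complex Hilbert space,
`‖PQ + QP‖ = 2 ↔ ‖PQ‖ = 1`. -/
theorem norm_anticommutator_eq_two_iff
    {H : Type*} [NormedAddCommGroup H] [InnerProductSpace ℂ H] [CompleteSpace H]
    (P Q : H →L[ℂ] H) (hP : IsSelfAdjoint P) (hP2 : P * P = P)
    (hQ : IsSelfAdjoint Q) (hQ2 : Q * Q = Q) :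
    ‖P * Q + Q * P‖ = 2 ↔ ‖P * Q‖ = 1 := by
  have hP1 : ‖P‖ ≤ 1 := proj_norm_le_one' P hP hP2
  have hQ1 : ‖Q‖ ≤ 1 := proj_norm_le_one' Q hQ hQ2
  have hPQ1 : ‖P * Q‖ ≤ 1 := by
    calc ‖P * Q‖ ≤ ‖P‖ * ‖Q‖ := norm_mul_le P Q
    _ ≤ 1 := by nlinarith [norm_nonneg P, norm_nonneg Q]
  have hQP : ‖Q * P‖ = ‖P * Q‖ := by
    have hs : Q * P = star (P * Q) := by rw [star_mul, hP.star_eq, hQ.star_eq]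
    rw [hs, norm_star]
  constructor
  · intro h
    have h2 : ‖P * Q + Q * P‖ ≤ ‖P * Q‖ + ‖Q * P‖ := norm_add_le _ _
    rw [h, hQP] at h2
    linarith
  · intro h
    have hadjP : ∀ z w : H, ⟪P z, w⟫_ℂ = ⟪z, P w⟫_ℂ := fun z w => by
      conv_lhs => rw [← hP.adjoint_eq]
      exact ContinuousLinearMap.adjoint_inner_left P w z
    have hadjQ : ∀ z w : H, ⟪Q z, w⟫_ℂ = ⟪z, Q w⟫_ℂ := fun z w => by
      conv_lhs => rw [← hQ.adjoint_eq]
      exact ContinuousLinearMap.adjoint_inner_left Q w z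
    refine le_antisymm ?_ ?_
    · calc ‖P * Q + Q * P‖ ≤ ‖P * Q‖ + ‖Q * P‖ := norm_add_le _ _
      _ = 2 := by rw [hQP, h]; ring
    · refine le_of_forall_pos_le_add (fun ε hε => ?_)
      set δ : ℝ := min (ε / 4) (1 / 2) with hδdef
      have hδpos : 0 < δ := lt_min (by linarith) (by norm_num)
      have hδhalf : δ ≤ 1 / 2 := min_le_right _ _
      have hδε : δ ≤ ε / 4 := min_le_left _ _
      -- find a near-maximizing vector for P * Q
      have hex : ∃ x : H, (1 - δ) * ‖x‖ < ‖(P * Q) x‖ := by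
        by_contra hc
        push_neg at hc
        have : ‖P * Q‖ ≤ 1 - δ :=
          (P * Q).opNorm_le_bound (by linarith) hc
        rw [h] at this
        linarith
      obtain ⟨x, hx⟩ := hex
      have hPQx : (P * Q) x = P (Q x) := rfl
      have hQx_pos : 0 < ‖Q x‖ := by
        rcases eq_or_lt_of_le (norm_nonneg (Q x)) with h0 | h0
        · exfalso
          have hz : Q x = 0 := by
            rwa [eq_comm, norm_eq_zero] at h0
          rw [hPQx, hz] at hx
          simp at hx
          nlinarith [norm_nonneg x, hx]
        · exact h0
      have hPQx_le : ‖P (Q x)‖ ≤ ‖Q x‖ := by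
        calc ‖P (Q x)‖ ≤ ‖P‖ * ‖Q x‖ := P.le_opNorm _
        _ ≤ 1 * ‖Q x‖ := by nlinarith [norm_nonneg (Q x)]
        _ = ‖Q x‖ := one_mul _
      have hQx_le : ‖Q x‖ ≤ ‖x‖ := by
        calc ‖Q x‖ ≤ ‖Q‖ * ‖x‖ := Q.le_opNorm _
        _ ≤ 1 * ‖x‖ := by nlinarith [norm_nonneg x]
        _ = ‖x‖ := one_mul _
      set u : H := ‖Q x‖⁻¹ • (Q x) with hudef
      have hu : ‖u‖ = 1 := by
        rw [hudef, norm_smul, norm_inv, norm_norm, inv_mul_cancel₀ (ne_of_gt hQx_pos)]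
      have hQQx : Q (Q x) = Q x := by
        have := congrArg (fun T : H →L[ℂ] H => T x) hQ2
        simpa using this
      have hPPu : P (P u) = P u := by
        have := congrArg (fun T : H →L[ℂ] H => T u) hP2
        simpa using this
      have hQu : Q u = u := by
        rw [hudef, Q.map_smul_of_tower, hQQx]
      have hPu : 1 - δ < ‖P u‖ := by
        have hPu_eq : ‖P u‖ = ‖Q x‖⁻¹ * ‖P (Q x)‖ := by
          rw [hudef, P.map_smul_of_tower, norm_smul, norm_inv, norm_norm]
        have h1 : (1 - δ) * ‖Q x‖ < ‖P (Q x)‖ := by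
          calc (1 - δ) * ‖Q x‖ ≤ (1 - δ) * ‖x‖ := by nlinarith
          _ < ‖(P * Q) x‖ := hx
          _ = ‖P (Q x)‖ := by rw [hPQx]
        rw [hPu_eq]
        calc 1 - δ = ((1 - δ) * ‖Q x‖) * ‖Q x‖⁻¹ := by
              field_simp
        _ < ‖P (Q x)‖ * ‖Q x‖⁻¹ := by
              apply mul_lt_mul_of_pos_right h1 (inv_pos.mpr hQx_pos)
        _ = ‖Q x‖⁻¹ * ‖P (Q x)‖ := mul_comm _ _
      -- the key inner product computation
      have hinner : Complex.re (⟪(P * Q + Q * P) u, u⟫_ℂ) = 2 * ‖P u‖ ^ 2 := by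
        have e1 : (P * Q + Q * P) u = P (Q u) + Q (P u) := rfl
        have e2 : ⟪(P * Q + Q * P) u, u⟫_ℂ = ⟪P u, u⟫_ℂ + ⟪Q (P u), u⟫_ℂ := by
          rw [e1, inner_add_left, hQu]
        have e3 : ⟪Q (P u), u⟫_ℂ = ⟪P u, u⟫_ℂ := by
          rw [hadjQ, hQu]
        have e4 : ⟪P u, u⟫_ℂ = ⟪P u, P u⟫_ℂ := by
          conv_lhs => rw [← hPPu]
          rw [hadjP]
        have e5 : Complex.re (⟪P u, P u⟫_ℂ) = ‖P u‖ ^ 2 := by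
          rw [← @inner_self_eq_norm_sq ℂ]; rfl
        rw [e2, e3, e4]
        simp [Complex.add_re, e5]
        rw [← Complex.ofReal_pow, Complex.ofReal_re]
        ring
      have hbound : 2 * ‖P u‖ ^ 2 ≤ ‖P * Q + Q * P‖ := by
        rw [← hinner]
        calc Complex.re (⟪(P * Q + Q * P) u, u⟫_ℂ)
            ≤ ‖(⟪(P * Q + Q * P) u, u⟫_ℂ)‖ := Complex.re_le_norm _
        _ ≤ ‖(P * Q + Q * P) u‖ * ‖u‖ := norm_inner_le_norm _ _
        _ ≤ (‖P * Q + Q * P‖ * ‖u‖) * ‖u‖ := by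
              have := (P * Q + Q * P).le_opNorm u
              nlinarith [norm_nonneg u]
        _ = ‖P * Q + Q * P‖ := by rw [hu]; ring
      nlinarith [hPu, hδhalf, hδε, hbound]
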